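/- For multidimensional boxes A = ∏ᵢ [aᵢ⁻, aᵢ⁺] and B = ∏ᵢ [bᵢ⁻, bᵢ⁺] in ℝⁿ, the gH-difference A ⊖_g B exists if and only if either (i) aᵢ⁻ − bᵢ⁻ ≤ aᵢ⁺ − bᵢ⁺ for all i = 1,…,n, or (ii) aᵢ⁻ − bᵢ⁻ ≥ aᵢ⁺ − bᵢ⁺ for all i; and in these cases A ⊖_g B = ∏ᵢ ([aᵢ⁻, aᵢ⁺] ⊖_g [bᵢ⁻, bᵢ⁺]). -/

import Mathlib

open Pointwise

lemma pi_add_pi {n : ℕ} (s t : Fin n → Set ℝ) :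
    Set.univ.pi s + Set.univ.pi t = Set.univ.pi (fun i => s i + t i) := by
  ext x
  constructor
  · rintro ⟨y, hy, z, hz, rfl⟩ i -
    exact Set.add_mem_add (hy i trivial) (hz i trivial)
  · intro hx
    choose y hy z hz hxyz using fun i => hx i trivial
    exact ⟨y, fun i _ => hy i, z, fun i _ => hz i, by funext i; exact hxyz i⟩

lemma neg_pi {n : ℕ} (s : Fin n → Set ℝ) :
    -(Set.univ.pi s) = Set.univ.pi (fun i => -(s i)) := by
  ext x
  simp [Set.mem_pi, Set.mem_neg, Pi.neg_apply]

lemma eval_image_add {n : ℕ} (s t : Set (Fin n → ℝ)) (i : Fin n) :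
    (fun x => x i) '' (s + t) = (fun x => x i) '' s + (fun x => x i) '' t :=
  Set.image_add (Pi.evalAddMonoidHom (fun _ => ℝ) i)

lemma key1d {a₁ a₂ b₁ b₂ : ℝ} {S : Set ℝ} (hS : S.Nonempty) (hc : IsCompact S)
    (hb : b₁ ≤ b₂) (h : Set.Icc a₁ a₂ = Set.Icc b₁ b₂ + S) : a₁ - b₁ ≤ a₂ - b₂ := by
  have hM : sSup S ∈ S := hc.sSup_mem hS
  have hm : sInf S ∈ S := hc.sInf_mem hS
  have h1 : b₂ + sSup S ∈ Set.Icc a₁ a₂ := by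
    rw [h]; exact Set.add_mem_add ⟨hb, le_rfl⟩ hM
  have h2 : b₁ + sInf S ∈ Set.Icc a₁ a₂ := by
    rw [h]; exact Set.add_mem_add ⟨le_rfl, hb⟩ hm
  have hmM : sInf S ≤ sSup S := csInf_le_csSup hS hc.bddBelow hc.bddAbove
  have := h1.2
  have := h2.1
  linarith

theorem gH_difference_boxes {n : ℕ} (a₁ a₂ b₁ b₂ : Fin n → ℝ)
    (ha : ∀ i, a₁ i ≤ a₂ i) (hb : ∀ i, b₁ i ≤ b₂ i) :
    ((∃ C : Set (Fin n → ℝ), C.Nonempty ∧ IsCompact C ∧ Convex ℝ C ∧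
        (Set.univ.pi (fun i => Set.Icc (a₁ i) (a₂ i)) =
            Set.univ.pi (fun i => Set.Icc (b₁ i) (b₂ i)) + C ∨
          Set.univ.pi (fun i => Set.Icc (b₁ i) (b₂ i)) =
            Set.univ.pi (fun i => Set.Icc (a₁ i) (a₂ i)) + (-C))) ↔
      ((∀ i, a₁ i - b₁ i ≤ a₂ i - b₂ i) ∨ (∀ i, a₂ i - b₂ i ≤ a₁ i - b₁ i))) ∧
    ((∀ i, a₁ i - b₁ i ≤ a₂ i - b₂ i) →
      Set.univ.pi (fun i => Set.Icc (a₁ i) (a₂ i)) =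
        Set.univ.pi (fun i => Set.Icc (b₁ i) (b₂ i)) +
          Set.univ.pi (fun i => Set.Icc (a₁ i - b₁ i) (a₂ i - b₂ i))) ∧
    ((∀ i, a₂ i - b₂ i ≤ a₁ i - b₁ i) →
      Set.univ.pi (fun i => Set.Icc (b₁ i) (b₂ i)) =
        Set.univ.pi (fun i => Set.Icc (a₁ i) (a₂ i)) +
          (-(Set.univ.pi (fun i => Set.Icc (a₂ i - b₂ i) (a₁ i - b₁ i))))) := by
  have case1 : (∀ i, a₁ i - b₁ i ≤ a₂ i - b₂ i) →
      Set.univ.pi (fun i => Set.Icc (a₁ i) (a₂ i)) =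
        Set.univ.pi (fun i => Set.Icc (b₁ i) (b₂ i)) +
          Set.univ.pi (fun i => Set.Icc (a₁ i - b₁ i) (a₂ i - b₂ i)) := by
    intro h
    rw [pi_add_pi]
    refine Set.pi_congr rfl fun i _ => ?_
    rw [Set.Icc_add_Icc (hb i) (h i)]
    congr 1 <;> ring
  have case2 : (∀ i, a₂ i - b₂ i ≤ a₁ i - b₁ i) →
      Set.univ.pi (fun i => Set.Icc (b₁ i) (b₂ i)) =
        Set.univ.pi (fun i => Set.Icc (a₁ i) (a₂ i)) +
          (-(Set.univ.pi (fun i => Set.Icc (a₂ i - b₂ i) (a₁ i - b₁ i)))) := by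
    intro h
    rw [neg_pi, pi_add_pi]
    refine Set.pi_congr rfl fun i _ => ?_
    rw [Set.neg_Icc, Set.Icc_add_Icc (ha i) (neg_le_neg (h i))]
    congr 1 <;> ring
  refine ⟨⟨?_, ?_⟩, case1, case2⟩
  · rintro ⟨C, hCne, hCc, -, hC | hC⟩
    · left
      intro i
      have hproj := congrArg (fun s => (fun x : Fin n → ℝ => x i) '' s) hC
      rw [eval_image_add] at hproj
      rw [Set.eval_image_univ_pi (by
        rw [Set.univ_pi_nonempty_iff]; exact fun j => Set.nonempty_Icc.2 (ha j)),
        Set.eval_image_univ_pi (by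
        rw [Set.univ_pi_nonempty_iff]; exact fun j => Set.nonempty_Icc.2 (hb j))] at hproj
      exact key1d (hCne.image _) (hCc.image (continuous_apply i)) (hb i) hproj
    · right
      intro i
      have hproj := congrArg (fun s => (fun x : Fin n → ℝ => x i) '' s) hC
      rw [eval_image_add] at hproj
      rw [Set.eval_image_univ_pi (by
        rw [Set.univ_pi_nonempty_iff]; exact fun j => Set.nonempty_Icc.2 (hb j)),
        Set.eval_image_univ_pi (by
        rw [Set.univ_pi_nonempty_iff]; exact fun j => Set.nonempty_Icc.2 (ha j))] at hproj
      have := key1d (hCne.neg.image _) ((hCc.neg.image (continuous_apply i))) (ha i) hproj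
      linarith
  · rintro (h | h)
    · exact ⟨_, (Set.univ_pi_nonempty_iff).2 fun i => Set.nonempty_Icc.2 (h i),
        isCompact_univ_pi fun i => isCompact_Icc,
        convex_pi fun i _ => convex_Icc _ _, Or.inl (case1 h)⟩
    · exact ⟨_, (Set.univ_pi_nonempty_iff).2 fun i => Set.nonempty_Icc.2 (h i),
        isCompact_univ_pi fun i => isCompact_Icc,
        convex_pi fun i _ => convex_Icc _ _, Or.inr (case2 h)⟩
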